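/- arXiv:1112.2117 — 2 statements merged into one kernel-verified Lean document; each statement's English description precedes it below -/
import Mathlib

section
/- In the game with α = β = 1 and target n = 3, the first player's winning probability is I(p) = 1 − 2p + 5p² − 4p³ + p⁴. -/
open MeasureTheory ProbabilityTheory

noncomputable def hitTime {Ω : Type*} (α β n : ℝ) (X : ℕ → Ω → Bool) (ω : Ω) : ℕ :=
  sInf {k : ℕ | n ≤ α * k + β * ((Finset.range k).filter (fun i => X i ω = true)).card}

lemma hitTime_eq {Ω : Type*} (X : ℕ → Ω → Bool) (ω : Ω) :
    hitTime 1 1 3 X ω = if X 0 ω || X 1 ω then 2 else 3 := by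
  unfold hitTime
  split
  case isTrue h =>
    refine le_antisymm (Nat.sInf_le ?_) (le_csInf ⟨2, ?_⟩ ?_)
    · have hc : 0 < ((Finset.range 2).filter (fun i => X i ω = true)).card := by
        refine Finset.card_pos.mpr ?_
        rcases Bool.or_eq_true_iff.mp h with h0 | h1
        · exact ⟨0, by simp [h0]⟩
        · exact ⟨1, by simp [h1]⟩
      have hc' : (1:ℝ) ≤ ((Finset.range 2).filter (fun i => X i ω = true)).card := by
        exact_mod_cast hc
      show (3:ℝ) ≤ 1 * (2:ℕ) + 1 * _
      push_cast
      linarith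
    · have hc : 0 < ((Finset.range 2).filter (fun i => X i ω = true)).card := by
        refine Finset.card_pos.mpr ?_
        rcases Bool.or_eq_true_iff.mp h with h0 | h1
        · exact ⟨0, by simp [h0]⟩
        · exact ⟨1, by simp [h1]⟩
      have hc' : (1:ℝ) ≤ ((Finset.range 2).filter (fun i => X i ω = true)).card := by
        exact_mod_cast hc
      show (3:ℝ) ≤ 1 * (2:ℕ) + 1 * _
      push_cast
      linarith
    · intro k hk
      by_contra hlt
      push_neg at hlt
      have h1 : (k:ℝ) ≤ 1 := by exact_mod_cast Nat.lt_succ_iff.mp hlt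
      have hcle : ((Finset.range k).filter (fun i => X i ω = true)).card ≤ k :=
        (Finset.card_filter_le _ _).trans (Finset.card_range k).le
      have h2 : (((Finset.range k).filter (fun i => X i ω = true)).card : ℝ) ≤ (k:ℝ) := by
        exact_mod_cast hcle
      have hk' : (3:ℝ) ≤ 1 * k + 1 * ((Finset.range k).filter (fun i => X i ω = true)).card := hk
      linarith
  case isFalse h =>
    simp only [Bool.or_eq_true, not_or] at h
    obtain ⟨h0, h1⟩ := h
    refine le_antisymm (Nat.sInf_le ?_) (le_csInf ⟨3, ?_⟩ ?_)
    · show (3:ℝ) ≤ 1 * (3:ℕ) + 1 * _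
      have : (0:ℝ) ≤ (((Finset.range 3).filter (fun i => X i ω = true)).card : ℝ) :=
        Nat.cast_nonneg _
      push_cast
      linarith
    · show (3:ℝ) ≤ 1 * (3:ℕ) + 1 * _
      have : (0:ℝ) ≤ (((Finset.range 3).filter (fun i => X i ω = true)).card : ℝ) :=
        Nat.cast_nonneg _
      push_cast
      linarith
    · intro k hk
      by_contra hlt
      push_neg at hlt
      have hk2 : k ≤ 2 := Nat.lt_succ_iff.mp hlt
      have hempty : (Finset.range k).filter (fun i => X i ω = true) = ∅ := by
        refine Finset.filter_eq_empty_iff.mpr ?_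
        intro i hi
        have hik : i < k := Finset.mem_range.mp hi
        have hi2 : i < 2 := lt_of_lt_of_le hik hk2
        interval_cases i
        · simp [h0]
        · simp [h1]
      have hk' : (3:ℝ) ≤ 1 * k + 1 * ((Finset.range k).filter (fun i => X i ω = true)).card := hk
      rw [hempty] at hk'
      simp at hk'
      have : (k:ℝ) ≤ 2 := by exact_mod_cast hk2
      linarith

theorem stmt_16 {Ω : Type*} [MeasurableSpace Ω] (μ : Measure Ω) [IsProbabilityMeasure μ]
    (p : ℝ) (hp : p ∈ Set.Icc (0 : ℝ) 1)
    (X Y : ℕ → Ω → Bool)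
    (hXm : ∀ i, Measurable (X i)) (hYm : ∀ i, Measurable (Y i))
    (hindep : iIndepFun (Sum.elim X Y) μ)
    (hX : ∀ i, μ {ω | X i ω = true} = ENNReal.ofReal p)
    (hY : ∀ i, μ {ω | Y i ω = true} = ENNReal.ofReal p) :
    μ {ω | hitTime 1 1 3 X ω ≤ hitTime 1 1 3 Y ω} =
      ENNReal.ofReal (1 - 2 * p + 5 * p ^ 2 - 4 * p ^ 3 + p ^ 4) := by
  obtain ⟨hp0, hp1⟩ := hp
  set q : ℝ := 1 - p with hq
  have hq0 : 0 ≤ q := by simp [hq]; linarith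
  have hq1 : q ≤ 1 := by simp [hq]; linarith
  set B : Set Ω := (X 0)⁻¹' {false} ∩ (X 1)⁻¹' {false} with hBdef
  set C : Set Ω := B ∩ ((Y 0)⁻¹' {false} ∩ (Y 1)⁻¹' {false}) with hCdef
  have hmB : MeasurableSet B :=
    ((hXm 0) (measurableSet_singleton false)).inter ((hXm 1) (measurableSet_singleton false))
  have hmC : MeasurableSet C :=
    hmB.inter (((hYm 0) (measurableSet_singleton false)).inter
      ((hYm 1) (measurableSet_singleton false)))
  have hset : {ω | hitTime 1 1 3 X ω ≤ hitTime 1 1 3 Y ω} = (B \ C)ᶜ := by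
    ext ω
    simp only [Set.mem_setOf_eq, hitTime_eq, Set.mem_compl_iff, Set.mem_diff, Set.mem_inter_iff,
      Set.mem_preimage, Set.mem_singleton_iff, hBdef, hCdef]
    cases hx0 : X 0 ω <;> cases hx1 : X 1 ω <;> cases hy0 : Y 0 ω <;> cases hy1 : Y 1 ω <;>
      simp
  have hμXf : ∀ i, μ ((X i)⁻¹' {false}) = ENNReal.ofReal q := by
    intro i
    have he : (X i)⁻¹' ({false} : Set Bool) = ((X i)⁻¹' {true})ᶜ := by
      ext ω; cases h : X i ω <;> simp [h]
    have he2 : (X i)⁻¹' ({true} : Set Bool) = {ω | X i ω = true} := rfl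
    rw [he, prob_compl_eq_one_sub ((hXm i) (measurableSet_singleton true)), he2, hX i,
      ← ENNReal.ofReal_one, ← ENNReal.ofReal_sub _ hp0]
  have hμYf : ∀ i, μ ((Y i)⁻¹' {false}) = ENNReal.ofReal q := by
    intro i
    have he : (Y i)⁻¹' ({false} : Set Bool) = ((Y i)⁻¹' {true})ᶜ := by
      ext ω; cases h : Y i ω <;> simp [h]
    have he2 : (Y i)⁻¹' ({true} : Set Bool) = {ω | Y i ω = true} := rfl
    rw [he, prob_compl_eq_one_sub ((hYm i) (measurableSet_singleton true)), he2, hY i,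
      ← ENNReal.ofReal_one, ← ENNReal.ofReal_sub _ hp0]
  have hμB : μ B = ENNReal.ofReal (q ^ 2) := by
    have h2 := hindep.measure_inter_preimage_eq_mul (S := {Sum.inl 0, Sum.inl 1})
      (sets := fun _ => ({false} : Set Bool)) (fun i _ => measurableSet_singleton false)
    rw [Finset.prod_insert (by decide), Finset.prod_singleton, Finset.set_biInter_insert,
      Finset.set_biInter_singleton] at h2
    simp only [Sum.elim_inl] at h2
    rw [hBdef, h2, hμXf 0, hμXf 1, ← ENNReal.ofReal_mul hq0, sq]
  have hμC : μ C = ENNReal.ofReal (q ^ 4) := by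
    have h2 := hindep.measure_inter_preimage_eq_mul
      (S := {Sum.inl 0, Sum.inl 1, Sum.inr 0, Sum.inr 1})
      (sets := fun _ => ({false} : Set Bool)) (fun i _ => measurableSet_singleton false)
    rw [Finset.prod_insert (by decide), Finset.prod_insert (by decide),
      Finset.prod_insert (by decide), Finset.prod_singleton, Finset.set_biInter_insert,
      Finset.set_biInter_insert, Finset.set_biInter_insert, Finset.set_biInter_singleton] at h2
    simp only [Sum.elim_inl, Sum.elim_inr] at h2
    rw [hCdef, hBdef, Set.inter_assoc, h2, hμXf 0, hμXf 1, hμYf 0, hμYf 1,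
      ← ENNReal.ofReal_mul hq0, ← ENNReal.ofReal_mul hq0, ← ENNReal.ofReal_mul hq0]
    ring_nf
  have hCB : C ⊆ B := Set.inter_subset_left
  have hdiff : μ (B \ C) = ENNReal.ofReal (q ^ 2 - q ^ 4) := by
    rw [measure_diff hCB hmC.nullMeasurableSet (measure_ne_top μ C), hμB, hμC,
      ← ENNReal.ofReal_sub _ (by positivity)]
  rw [hset, prob_compl_eq_one_sub (hmB.diff hmC), hdiff, ← ENNReal.ofReal_one,
    ← ENNReal.ofReal_sub _ (sub_nonneg.mpr (pow_le_pow_of_le_one hq0 hq1 (by norm_num)))]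
  congr 1
  rw [hq]
  ring
end

section
/- For any ℕ-valued random variable τ with distribution determined by a polynomial in p (each P(τ = k) a polynomial in p with rational coefficients), the function p ↦ (1 + Σ_k P(τ = k)²)/2 is a polynomial in p; in the game with α, β, n as above with ⌈n/(α+β)⌉ < ⌈n/α⌉, the first player's winning probability I(p | n, α, β) is a polynomial in p of degree 2⌈n/α⌉ − 2. -/
open MeasureTheory ProbabilityTheory

section Stmt18Aux
open Finset Polynomial
namespace Stmt18


noncomputable def hT (α β n : ℝ) (b : ℕ → Bool) : ℕ := hitTime α β n (fun i b => b i) b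

lemma hitTime_eq {Ω : Type*} (α β n : ℝ) (X : ℕ → Ω → Bool) (ω : Ω) :
    hitTime α β n X ω = hT α β n (fun i => X i ω) := rfl

noncomputable def sc (α β : ℝ) (b : ℕ → Bool) (k : ℕ) : ℝ :=
  α * k + β * ((Finset.range k).filter (fun i => b i = true)).card

lemma hT_def (α β n : ℝ) (b : ℕ → Bool) :
    hT α β n b = sInf {k : ℕ | n ≤ sc α β b k} := rfl

variable {α β n : ℝ}

lemma sc_mono (hα : 0 < α) (hβ : 0 < β) (b : ℕ → Bool) {k l : ℕ} (hkl : k ≤ l) :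
    sc α β b k ≤ sc α β b l := by
  unfold sc
  have h1 : (k : ℝ) ≤ l := by exact_mod_cast hkl
  have h2 : (((Finset.range k).filter (fun i => b i = true)).card : ℝ)
      ≤ (((Finset.range l).filter (fun i => b i = true)).card : ℝ) := by
    exact_mod_cast Finset.card_le_card
      (Finset.filter_subset_filter _ (Finset.range_subset_range.2 hkl))
  nlinarith

lemma sc_congr {b b' : ℕ → Bool} {M : ℕ} (h : ∀ i < M, b i = b' i) {k : ℕ} (hk : k ≤ M) :
    sc α β b k = sc α β b' k := by
  unfold sc
  have : Finset.filter (fun i => b i = true) (Finset.range k)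
      = Finset.filter (fun i => b' i = true) (Finset.range k) := by
    apply Finset.filter_congr
    intro i hi
    rw [h i (lt_of_lt_of_le (Finset.mem_range.1 hi) hk)]
  rw [this]

lemma hT_le_iff (hα : 0 < α) (hβ : 0 < β) {b : ℕ → Bool} {k N : ℕ} (hN : n ≤ α * N) :
    hT α β n b ≤ k ↔ n ≤ sc α β b k := by
  have hNmem : n ≤ sc α β b N := by
    unfold sc
    have : (0:ℝ) ≤ β * ((Finset.range N).filter (fun i => b i = true)).card := by positivity
    linarith
  constructor
  · intro h
    have hne : {k : ℕ | n ≤ sc α β b k}.Nonempty := ⟨N, hNmem⟩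
    have hmem := Nat.sInf_mem hne
    exact le_trans hmem (sc_mono hα hβ b (by rwa [hT_def] at h))
  · intro h
    rw [hT_def]
    exact Nat.sInf_le h

lemma hT_le_N (hα : 0 < α) (hβ : 0 < β) {b : ℕ → Bool} {N : ℕ} (hN : n ≤ α * N) :
    hT α β n b ≤ N := (hT_le_iff hα hβ hN).2 (by
  unfold sc
  have : (0:ℝ) ≤ β * ((Finset.range N).filter (fun i => b i = true)).card := by positivity
  linarith)

lemma hT_congr (hα : 0 < α) (hβ : 0 < β) {b b' : ℕ → Bool} {M N : ℕ}
    (hN : n ≤ α * N) (hNM : N ≤ M + 1) (h : ∀ i < M, b i = b' i) :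
    hT α β n b = hT α β n b' := by
  have key : ∀ (c c' : ℕ → Bool), (∀ i < M, c i = c' i) → hT α β n c' ≤ hT α β n c := by
    intro c c' hcc'
    rcases le_or_gt (hT α β n c') (hT α β n c) with h' | h'
    · exact h'
    · exfalso
      have h1 : hT α β n c ≤ M := by
        have := hT_le_N hα hβ (b := c') (N := N)  hN
        omega
      have h2 : n ≤ sc α β c (hT α β n c) := (hT_le_iff hα hβ hN).1 le_rfl
      rw [sc_congr hcc' h1] at h2
      exact absurd ((hT_le_iff hα hβ hN).2 h2) (not_le.2 h')
  exact le_antisymm (key b' b (fun i hi => (h i hi).symm)) (key b b' h)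



def bext {M : ℕ} (u : Fin M → Bool) : ℕ → Bool := fun i => if h : i < M then u ⟨i, h⟩ else true

lemma cnt_bext {M : ℕ} (u : Fin M → Bool) (k : ℕ) (hk : k = M) :
    ((Finset.range k).filter (fun i => bext u i = true)).card
      = (Finset.univ.filter (fun i => u i = true)).card := by
  subst hk
  rw [Finset.card_filter, Finset.card_filter]
  rw [← Fin.sum_univ_eq_sum_range (fun i => if bext u i = true then 1 else 0) k]
  apply Finset.sum_congr rfl
  intro i _
  simp [bext, i.isLt]

def hcard {M : ℕ} (u : Fin M → Bool) : ℕ := (Finset.univ.filter (fun i => u i = true)).card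

lemma hcard_le {M : ℕ} (u : Fin M → Bool) : hcard u ≤ M := by
  simpa [hcard] using (Finset.card_filter_le Finset.univ (fun i => u i = true))

noncomputable def wB (b : Bool) : Polynomial ℝ := if b then X else 1 - X

noncomputable def WP {M : ℕ} (u : Fin M → Bool) : Polynomial ℝ := ∏ i, wB (u i)

lemma WP_eq {M : ℕ} (u : Fin M → Bool) :
    WP u = X ^ hcard u * (1 - X) ^ (M - hcard u) := by
  unfold WP wB
  rw [Finset.prod_ite]
  rw [Finset.prod_const, Finset.prod_const]
  have hcc : (Finset.univ.filter (fun i => ¬ u i = true)).card = M - hcard u := by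
    have := Finset.card_filter_add_card_filter_not
      (s := (Finset.univ : Finset (Fin M))) (p := fun i => u i = true)
    have h2 : (Finset.univ : Finset (Fin M)).card = M := by simp
    unfold hcard
    omega
  rw [hcc]
  rfl

lemma onesubX_natDegree : ((1 - X : Polynomial ℝ)).natDegree = 1 := by
  have : (1 - X : Polynomial ℝ) = -(X - C 1) := by rw [Polynomial.C_1]; ring
  rw [this, Polynomial.natDegree_neg, Polynomial.natDegree_X_sub_C]

lemma onesubX_leadingCoeff : ((1 - X : Polynomial ℝ)).leadingCoeff = -1 := by
  rw [Polynomial.leadingCoeff, onesubX_natDegree]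
  simp [Polynomial.coeff_one]

lemma onesubX_pow_natDegree (j : ℕ) : (((1 - X : Polynomial ℝ)) ^ j).natDegree = j := by
  rw [Polynomial.natDegree_pow, onesubX_natDegree, mul_one]

lemma onesubX_pow_coeff (j : ℕ) : (((1 - X : Polynomial ℝ)) ^ j).coeff j = (-1) ^ j := by
  have h := Polynomial.leadingCoeff_pow (1 - X : Polynomial ℝ) j
  rw [Polynomial.leadingCoeff, onesubX_pow_natDegree] at h
  rw [h, onesubX_leadingCoeff]

lemma WP_natDegree_le {M : ℕ} (u : Fin M → Bool) : (WP u).natDegree ≤ M := by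
  rw [WP_eq]
  refine le_trans (Polynomial.natDegree_mul_le) ?_
  rw [Polynomial.natDegree_X_pow, onesubX_pow_natDegree]
  have := hcard_le u
  omega

lemma WP_coeff_M {M : ℕ} (u : Fin M → Bool) :
    (WP u).coeff M = (-1 : ℝ) ^ (M - hcard u) := by
  rw [WP_eq]
  have h : M = (M - hcard u) + hcard u := by have := hcard_le u; omega
  have h2 := Polynomial.coeff_X_pow_mul ((1 - X : Polynomial ℝ) ^ (M - hcard u)) (hcard u) (M - hcard u)
  rw [← h] at h2
  rw [h2, onesubX_pow_coeff]

lemma WP_eval {M : ℕ} (u : Fin M → Bool) (p : ℝ) :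
    (WP u).eval p = ∏ i, (if u i then p else 1 - p) := by
  unfold WP wB
  rw [Polynomial.eval_prod]
  apply Finset.prod_congr rfl
  intro i _
  by_cases h : u i <;> simp [h]

lemma sum_WP_eval {M : ℕ} (p : ℝ) :
    ∑ u : Fin M → Bool, (WP u).eval p = 1 := by
  have := Finset.prod_univ_sum (fun _ : Fin M => (Finset.univ : Finset Bool))
    (fun _ b => if b then p else 1 - p)
  simp only [Fintype.piFinset_univ] at this
  calc ∑ u : Fin M → Bool, (WP u).eval p
      = ∑ u : Fin M → Bool, ∏ i, (if u i then p else 1 - p) := by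
        exact Finset.sum_congr rfl fun u _ => WP_eval u p
    _ = ∏ _i : Fin M, ∑ b : Bool, (if b then p else 1 - p) := this.symm
    _ = 1 := by simp



lemma altsum (M : ℕ) : ∀ c, 1 ≤ c → c ≤ M →
    ∑ j ∈ Finset.range c, (-1 : ℝ) ^ j * (Nat.choose M j : ℝ)
      = (-1) ^ (c - 1) * (Nat.choose (M - 1) (c - 1) : ℝ) := by
  intro c
  induction c with
  | zero => intro h; omega
  | succ c ih =>
    intro _ hcM
    rcases Nat.eq_zero_or_pos c with hc0 | hc1
    · subst hc0; simp
    · have hM1 : 1 ≤ M := le_trans hc1 (by omega)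
      rw [Finset.sum_range_succ, ih hc1 (by omega)]
      have hM : M - 1 + 1 = M := by omega
      have hc : c - 1 + 1 = c := by omega
      have hpascal : (Nat.choose M c : ℝ)
          = (Nat.choose (M - 1) (c - 1) : ℝ) + (Nat.choose (M - 1) c : ℝ) := by
        have h2 : Nat.choose M c = Nat.choose (M - 1) (c - 1) + Nat.choose (M - 1) c := by
          have h4 := Nat.choose_succ_succ (M - 1) (c - 1)
          simpa [Nat.succ_eq_add_one, hM, hc] using h4
        rw [h2]
        push_cast
        ring
      have hsign : (-1 : ℝ) ^ (c - 1) = -(-1 : ℝ) ^ c := by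
        have h3 : (-1 : ℝ) ^ c = (-1) ^ (c - 1) * (-1) := by rw [← pow_succ, hc]
        rw [h3]; ring
      rw [hpascal, hsign]
      have : c + 1 - 1 = c := by omega
      rw [this]
      ring

lemma sum_fun_hcard (M : ℕ) (f : ℕ → ℝ) :
    ∑ u : Fin M → Bool, f (hcard u) = ∑ j ∈ Finset.range (M + 1), (Nat.choose M j : ℝ) * f j := by
  have hbij : ∑ u : Fin M → Bool, f (hcard u)
      = ∑ t ∈ (Finset.univ : Finset (Fin M)).powerset, f t.card := by
    apply Finset.sum_nbij' (i := fun u => Finset.univ.filter (fun i => u i = true))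
      (j := fun t => fun i => decide (i ∈ t))
    · intro u _; simp
    · intro t _; simp
    · intro u _
      funext i
      by_cases h : u i = true <;> simp [h]
    · intro t _
      ext i
      simp
    · intro u _
      rfl
  rw [hbij, Finset.sum_powerset_apply_card]
  simp only [Finset.card_univ, Fintype.card_fin, nsmul_eq_mul]



lemma pairsum {ι : Type*} [Fintype ι] [DecidableEq ι] (g : ι → ℕ) (K : ℕ)
    (hg : ∀ u, g u < K) (f : ι → ℝ) :
    ∑ x ∈ Finset.univ.filter (fun x : ι × ι => g x.1 ≤ g x.2), f x.1 * f x.2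
      = ((∑ u, f u) ^ 2
          + ∑ k ∈ Finset.range K, (∑ u ∈ Finset.univ.filter (fun u => g u = k), f u) ^ 2) / 2 := by
  classical
  set F : ι × ι → ℝ := fun x => f x.1 * f x.2 with hF
  set A := ∑ x ∈ Finset.univ.filter (fun x : ι × ι => g x.1 < g x.2), F x with hA
  set B := ∑ x ∈ Finset.univ.filter (fun x : ι × ι => g x.1 = g x.2), F x with hB
  set S := ∑ x : ι × ι, F x with hS
  have hle : ∑ x ∈ Finset.univ.filter (fun x : ι × ι => g x.1 ≤ g x.2), F x = A + B := by
    rw [← Finset.sum_filter_add_sum_filter_not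
      (Finset.univ.filter (fun x : ι × ι => g x.1 ≤ g x.2)) (fun x => g x.1 < g x.2) F]
    congr 1
    · rw [Finset.filter_filter]
      apply Finset.sum_congr _ (fun _ _ => rfl)
      apply Finset.filter_congr
      intro x _
      constructor
      · rintro ⟨_, h2⟩; exact h2
      · intro h; exact ⟨le_of_lt h, h⟩
    · rw [Finset.filter_filter]
      apply Finset.sum_congr _ (fun _ _ => rfl)
      apply Finset.filter_congr
      intro x _
      constructor
      · rintro ⟨h1, h2⟩; omega
      · intro h; omega
  have hgt : ∑ x ∈ Finset.univ.filter (fun x : ι × ι => ¬ g x.1 ≤ g x.2), F x = A := by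
    rw [hA]
    apply Finset.sum_nbij' (i := Prod.swap) (j := Prod.swap)
    · intro x hx; simp only [Finset.mem_filter, Finset.mem_univ, true_and, Prod.fst_swap,
        Prod.snd_swap] at hx ⊢; omega
    · intro x hx; simp only [Finset.mem_filter, Finset.mem_univ, true_and, Prod.fst_swap,
        Prod.snd_swap] at hx ⊢; omega
    · intro x _; simp
    · intro x _; simp
    · intro x _; rw [hF]; simp [mul_comm]
  have hSsplit : S = (A + B) + A := by
    rw [hS, ← Finset.sum_filter_add_sum_filter_not Finset.univ (fun x : ι × ι => g x.1 ≤ g x.2) F,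
      hle, hgt]
  have hSsq : S = (∑ u, f u) ^ 2 := by
    rw [hS, sq, Finset.sum_mul_sum, ← Finset.sum_product']
    rfl
  have hBfib : B = ∑ k ∈ Finset.range K,
      (∑ u ∈ Finset.univ.filter (fun u => g u = k), f u) ^ 2 := by
    have hsq : ∀ k, (∑ u ∈ Finset.univ.filter (fun u => g u = k), f u) ^ 2
        = ∑ x ∈ (Finset.univ.filter (fun u => g u = k)) ×ˢ (Finset.univ.filter (fun u => g u = k)),
            F x := by
      intro k
      rw [sq, Finset.sum_mul_sum, ← Finset.sum_product']
    rw [hB]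
    rw [Finset.sum_congr rfl (fun k _ => hsq k)]
    rw [← Finset.sum_biUnion]
    · apply Finset.sum_congr _ (fun _ _ => rfl)
      ext x
      simp only [Finset.mem_biUnion, Finset.mem_range, Finset.mem_product, Finset.mem_filter,
        Finset.mem_univ, true_and]
      constructor
      · intro h; exact ⟨g x.1, hg x.1, rfl, h.symm⟩
      · rintro ⟨k, _, h1, h2⟩; rw [h1, h2]
    · intro a _ b _ hab
      apply Finset.disjoint_left.2
      rintro x hx hx'
      simp only [Finset.mem_product, Finset.mem_filter, Finset.mem_univ, true_and] at hx hx'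
      exact hab (hx.1 ▸ hx'.1.symm ▸ rfl)
  rw [hle, hBfib.symm, ← hSsq]
  rw [hSsplit]
  ring



variable {Ω : Type} [MeasurableSpace Ω] {μ : Measure Ω} [IsProbabilityMeasure μ]
  {X Y : ℕ → Ω → Bool} {p : ℝ}

lemma single_meas (hXm : ∀ i, Measurable (X i))
    (hXp : ∀ i, μ {ω | X i ω = true} = ENNReal.ofReal p)
    (hp0 : 0 ≤ p) (hp1 : p ≤ 1) (j : ℕ) (b : Bool) :
    μ (X j ⁻¹' {b}) = ENNReal.ofReal (if b then p else 1 - p) := by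
  cases b
  · have hmeas : MeasurableSet {ω | X j ω = true} := by
      have h1 : {ω | X j ω = true} = X j ⁻¹' {true} := rfl
      rw [h1]; exact (hXm j) (measurableSet_singleton true)
    have hset : X j ⁻¹' {false} = {ω | X j ω = true}ᶜ := by
      ext ω; simp
    rw [hset, measure_compl hmeas (measure_ne_top μ _), hXp j, measure_univ]
    rw [show (if (false : Bool) then p else 1 - p) = 1 - p from rfl]
    rw [ENNReal.ofReal_sub 1 hp0, ENNReal.ofReal_one]
  · have hset : X j ⁻¹' {true} = {ω | X j ω = true} := by ext ω; simp
    rw [hset, hXp j]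
    simp


lemma atom_meas (hXm : ∀ i, Measurable (X i)) (hYm : ∀ i, Measurable (Y i))
    (hind : iIndepFun (Sum.elim X Y) μ)
    (hXp : ∀ i, μ {ω | X i ω = true} = ENNReal.ofReal p)
    (hYp : ∀ i, μ {ω | Y i ω = true} = ENNReal.ofReal p)
    (hp0 : 0 ≤ p) (hp1 : p ≤ 1) {M : ℕ} (u v : Fin M → Bool) :
    μ {ω | (∀ i : Fin M, X i ω = u i) ∧ (∀ i : Fin M, Y i ω = v i)}
      = ENNReal.ofReal ((∏ i : Fin M, (if u i then p else 1 - p))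
          * ∏ i : Fin M, (if v i then p else 1 - p)) := by
  classical
  set S : Finset (ℕ ⊕ ℕ) :=
    ((Finset.range M).image Sum.inl) ∪ ((Finset.range M).image Sum.inr) with hS
  set s : ℕ ⊕ ℕ → Set Ω :=
    Sum.elim (fun i => X i ⁻¹' {bext u i}) (fun i => Y i ⁻¹' {bext v i}) with hs
  have hmeas : ∀ j ∈ S, MeasurableSet[(inferInstance : MeasurableSpace Bool).comap
      (Sum.elim X Y j)] (s j) := by
    rintro (i | i) _
    · exact ⟨{bext u i}, trivial, rfl⟩
    · exact ⟨{bext v i}, trivial, rfl⟩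
  have hmain := hind.meas_biInter (S := S) (s := s) hmeas
  have hatom : {ω | (∀ i : Fin M, X i ω = u i) ∧ (∀ i : Fin M, Y i ω = v i)}
      = ⋂ j ∈ S, s j := by
    ext ω
    simp only [Set.mem_setOf_eq, Set.mem_iInter₂, hS, hs, Finset.mem_union, Finset.mem_image,
      Finset.mem_range]
    constructor
    · rintro ⟨hx, hy⟩ j hj
      rcases hj with ⟨i, hi, rfl⟩ | ⟨i, hi, rfl⟩
      · simp only [Sum.elim_inl, Set.mem_preimage, Set.mem_singleton_iff, bext, dif_pos hi]
        exact hx ⟨i, hi⟩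
      · simp only [Sum.elim_inr, Set.mem_preimage, Set.mem_singleton_iff, bext, dif_pos hi]
        exact hy ⟨i, hi⟩
    · intro h
      constructor
      · intro i
        have h5 := h (Sum.inl i.val) (Or.inl ⟨i.val, i.isLt, rfl⟩)
        simp only [Sum.elim_inl, Set.mem_preimage, Set.mem_singleton_iff, bext,
          dif_pos i.isLt] at h5
        simpa using h5
      · intro i
        have h5 := h (Sum.inr i.val) (Or.inr ⟨i.val, i.isLt, rfl⟩)
        simp only [Sum.elim_inr, Set.mem_preimage, Set.mem_singleton_iff, bext,
          dif_pos i.isLt] at h5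
        simpa using h5
  have hdisj : Disjoint ((Finset.range M).image Sum.inl) ((Finset.range M).image Sum.inr) := by
    apply Finset.disjoint_left.2
    rintro x hx hx'
    simp only [Finset.mem_image] at hx hx'
    obtain ⟨a, _, rfl⟩ := hx
    obtain ⟨b, _, h⟩ := hx'
    exact Sum.inr_ne_inl h
  have hprod : ∏ j ∈ S, μ (s j)
      = (∏ i ∈ Finset.range M, μ (X i ⁻¹' {bext u i}))
        * ∏ i ∈ Finset.range M, μ (Y i ⁻¹' {bext v i}) := by
    rw [hS, Finset.prod_union hdisj, Finset.prod_image (fun _ _ _ _ h => Sum.inl.inj h),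
      Finset.prod_image (fun _ _ _ _ h => Sum.inr.inj h)]
    rfl
  rw [hatom, hmain, hprod]
  have hXpr : ∏ i ∈ Finset.range M, μ (X i ⁻¹' {bext u i})
      = ENNReal.ofReal (∏ i : Fin M, (if u i then p else 1 - p)) := by
    rw [Finset.prod_congr rfl (fun i _ => single_meas hXm hXp hp0 hp1 i (bext u i))]
    rw [← ENNReal.ofReal_prod_of_nonneg]
    · congr 1
      rw [← Fin.prod_univ_eq_prod_range (fun i => if bext u i then p else 1 - p) M]
      apply Finset.prod_congr rfl
      intro i _
      simp [bext, i.isLt]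
    · intro i _
      by_cases h : bext u i <;> simp [h] <;> linarith
  have hYpr : ∏ i ∈ Finset.range M, μ (Y i ⁻¹' {bext v i})
      = ENNReal.ofReal (∏ i : Fin M, (if v i then p else 1 - p)) := by
    rw [Finset.prod_congr rfl (fun i _ => single_meas hYm hYp hp0 hp1 i (bext v i))]
    rw [← ENNReal.ofReal_prod_of_nonneg]
    · congr 1
      rw [← Fin.prod_univ_eq_prod_range (fun i => if bext v i then p else 1 - p) M]
      apply Finset.prod_congr rfl
      intro i _
      simp [bext, i.isLt]
    · intro i _
      by_cases h : bext v i <;> simp [h] <;> linarith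
  have hnn : 0 ≤ ∏ i : Fin M, (if u i then p else 1 - p) :=
    Finset.prod_nonneg (fun i _ => by by_cases h : u i <;> simp [h] <;> linarith)
  rw [hXpr, hYpr, ← ENNReal.ofReal_mul hnn]


noncomputable def ct (α β n : ℝ) (M : ℕ) (u : Fin M → Bool) : ℕ := hT α β n (bext u)

noncomputable def Pk (α β n : ℝ) (M k : ℕ) : Polynomial ℝ :=
  ∑ u ∈ Finset.univ.filter (fun u => ct α β n M u = k), WP u

noncomputable def Qp (α β n : ℝ) (M : ℕ) : Polynomial ℝ :=
  Polynomial.C (2⁻¹ : ℝ) * (1 + ∑ k ∈ Finset.range (M + 2), (Pk α β n M k) ^ 2)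

section Main

variable {α β n : ℝ} {M : ℕ}

lemma ct_lt (hα : 0 < α) (hβ : 0 < β) (hNα : n ≤ α * (M + 1)) (u : Fin M → Bool) :
    ct α β n M u < M + 2 := by
  have := hT_le_N hα hβ (b := bext u) (N := M + 1) (by exact_mod_cast hNα)
  unfold ct
  omega

lemma sc_bext_M (u : Fin M → Bool) :
    sc α β (bext u) M = α * M + β * (hcard u) := by
  unfold sc
  rw [cnt_bext u M rfl]
  rfl

lemma ct_top_iff (hα : 0 < α) (hβ : 0 < β) (hNα : n ≤ α * (M + 1)) (u : Fin M → Bool) :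
    ct α β n M u = M + 1 ↔ α * M + β * (hcard u) < n := by
  have hNR : n ≤ α * ((M + 1 : ℕ) : ℝ) := by push_cast; exact hNα
  have hle := hT_le_N hα hβ (b := bext u) (N := M + 1) hNR
  have hiff := hT_le_iff hα hβ (b := bext u) (k := M) (N := M + 1) hNR
  rw [sc_bext_M] at hiff
  unfold ct
  constructor
  · intro h
    by_contra hc
    push_neg at hc
    have := hiff.2 hc
    omega
  · intro h
    have hnle : ¬ hT α β n (bext u) ≤ M := fun hle' => absurd (hiff.1 hle') (not_le.2 h)
    omega

lemma Pk_natDegree_le (k : ℕ) : (Pk α β n M k).natDegree ≤ M :=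
  Polynomial.natDegree_sum_le_of_forall_le _ _ (fun u _ => WP_natDegree_le u)

lemma coeff_sq (P : Polynomial ℝ) (hP : P.natDegree ≤ M) :
    (P ^ 2).coeff (M + M) = (P.coeff M) ^ 2 := by
  rw [sq, Polynomial.coeff_mul, Finset.sum_eq_single (M, M)]
  · rw [sq]
  · rintro ⟨i, j⟩ hij hne
    rw [Finset.HasAntidiagonal.mem_antidiagonal] at hij
    rcases lt_or_ge M i with h | h
    · rw [Polynomial.coeff_eq_zero_of_natDegree_lt (lt_of_le_of_lt hP h), zero_mul]
    · have hj : M < j := by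
        rcases lt_or_ge M j with h' | h'
        · exact h'
        · exfalso
          have hi : i = M := by omega
          have hjj : j = M := by omega
          exact hne (by rw [hi, hjj])
      rw [Polynomial.coeff_eq_zero_of_natDegree_lt (lt_of_le_of_lt hP hj), mul_zero]
  · intro h
    exact absurd (Finset.HasAntidiagonal.mem_antidiagonal.2 (rfl : (M, M).1 + (M, M).2 = M + M)) h

lemma Ptop_coeff (hα : 0 < α) (hβ : 0 < β) (hn : 0 < n) (hM1 : 1 ≤ M)
    (hNα : n ≤ α * (M + 1)) (hMα : α * M < n) (hMαβ : n ≤ (α + β) * M) :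
    (Pk α β n M (M + 1)).coeff M ≠ 0 := by
  classical
  set Sset : Set ℕ := {j | n ≤ α * M + β * j} with hSset
  have hSne : Sset.Nonempty := by
    obtain ⟨j, hj⟩ := exists_nat_ge ((n - α * M) / β)
    refine ⟨j, ?_⟩
    rw [div_le_iff₀ hβ] at hj
    simp only [hSset, Set.mem_setOf_eq]
    linarith
  set c := sInf Sset with hc
  have hcmem : c ∈ Sset := Nat.sInf_mem hSne
  have hup : ∀ j j' : ℕ, j ≤ j' → j ∈ Sset → j' ∈ Sset := by
    intro j j' hjj hj
    simp only [hSset, Set.mem_setOf_eq] at hj ⊢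
    have hcast : (j : ℝ) ≤ (j' : ℝ) := by exact_mod_cast hjj
    nlinarith
  have hiffc : ∀ j : ℕ, j < c ↔ ¬ (n ≤ α * M + β * j) := by
    intro j
    constructor
    · intro h hmem
      have h9 := Nat.sInf_le (show j ∈ Sset from hmem)
      omega
    · intro h
      by_contra h2
      push_neg at h2
      exact h (hup c j (by omega) hcmem)
  have hc1 : 1 ≤ c := by
    rcases Nat.eq_zero_or_pos c with h0 | h
    · exfalso
      have h3 := hcmem
      rw [h0] at h3
      simp only [hSset, Set.mem_setOf_eq, Nat.cast_zero, mul_zero, add_zero] at h3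
      linarith
    · exact h
  have hcM : c ≤ M := by
    apply Nat.sInf_le
    simp only [hSset, Set.mem_setOf_eq]
    nlinarith
  have hcoeff : (Pk α β n M (M + 1)).coeff M
      = ∑ u ∈ Finset.univ.filter (fun u => ct α β n M u = M + 1), (-1 : ℝ) ^ (M - hcard u) := by
    unfold Pk
    rw [Polynomial.finset_sum_coeff]
    exact Finset.sum_congr rfl (fun u _ => WP_coeff_M u)
  rw [hcoeff]
  have hcond : ∀ u : Fin M → Bool, (ct α β n M u = M + 1) ↔ hcard u < c := by
    intro u
    rw [ct_top_iff hα hβ hNα u, hiffc (hcard u), not_le]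
  rw [Finset.sum_filter]
  have hstep1 : ∑ u : Fin M → Bool, (if ct α β n M u = M + 1 then (-1 : ℝ) ^ (M - hcard u) else 0)
      = ∑ u : Fin M → Bool, (fun j => if j < c then (-1 : ℝ) ^ (M - j) else 0) (hcard u) := by
    apply Finset.sum_congr rfl
    intro u _
    simp only
    rw [if_congr (hcond u) rfl rfl]
  rw [hstep1.trans (sum_fun_hcard M (fun j => if j < c then (-1 : ℝ) ^ (M - j) else 0))]
  have hstep2 : ∀ j ∈ Finset.range (M + 1),
      (Nat.choose M j : ℝ) * (if j < c then (-1 : ℝ) ^ (M - j) else 0)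
        = if j < c then (Nat.choose M j : ℝ) * (-1 : ℝ) ^ (M - j) else 0 := by
    intro j _
    split <;> simp
  rw [Finset.sum_congr rfl hstep2, ← Finset.sum_filter]
  have hfil : (Finset.range (M + 1)).filter (fun j => j < c) = Finset.range c := by
    ext j
    simp only [Finset.mem_filter, Finset.mem_range]
    omega
  rw [hfil]
  have hstep3 : ∀ j ∈ Finset.range c,
      (Nat.choose M j : ℝ) * (-1 : ℝ) ^ (M - j)
        = (-1 : ℝ) ^ M * ((-1 : ℝ) ^ j * (Nat.choose M j : ℝ)) := by
    intro j hj
    have hjM : j ≤ M := by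
      have := Finset.mem_range.1 hj
      omega
    have h1 : (-1 : ℝ) ^ (M - j) * (-1 : ℝ) ^ j = (-1 : ℝ) ^ M := by
      rw [← pow_add]
      congr 1
      omega
    have h2 : (-1 : ℝ) ^ j * (-1 : ℝ) ^ j = 1 := by
      rw [← pow_add, ← two_mul, pow_mul]
      norm_num
    calc (Nat.choose M j : ℝ) * (-1 : ℝ) ^ (M - j)
        = (Nat.choose M j : ℝ) * ((-1 : ℝ) ^ (M - j) * ((-1 : ℝ) ^ j * (-1 : ℝ) ^ j)) := by
          rw [h2, mul_one]
      _ = (Nat.choose M j : ℝ) * (((-1 : ℝ) ^ (M - j) * (-1 : ℝ) ^ j) * (-1 : ℝ) ^ j) := by ring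
      _ = (-1 : ℝ) ^ M * ((-1 : ℝ) ^ j * (Nat.choose M j : ℝ)) := by rw [h1]; ring
  rw [Finset.sum_congr rfl hstep3, ← Finset.mul_sum, altsum M c hc1 hcM]
  have hchoose : (0 : ℝ) < (Nat.choose (M - 1) (c - 1) : ℝ) := by
    exact_mod_cast Nat.choose_pos (by omega)
  intro hzero
  have habs : ((-1 : ℝ) ^ M * ((-1 : ℝ) ^ (c - 1) * (Nat.choose (M - 1) (c - 1) : ℝ))) ≠ 0 := by
    apply mul_ne_zero (pow_ne_zero _ (by norm_num))
    exact mul_ne_zero (pow_ne_zero _ (by norm_num)) (ne_of_gt hchoose)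
  exact habs hzero

lemma Qp_natDegree (hα : 0 < α) (hβ : 0 < β) (hn : 0 < n) (hM1 : 1 ≤ M)
    (hNα : n ≤ α * (M + 1)) (hMα : α * M < n) (hMαβ : n ≤ (α + β) * M) :
    (Qp α β n M).natDegree = 2 * M := by
  have hub : (Qp α β n M).natDegree ≤ 2 * M := by
    refine le_trans (Polynomial.natDegree_C_mul_le _ _) ?_
    refine le_trans (Polynomial.natDegree_add_le _ _) ?_
    rw [Polynomial.natDegree_one]
    rw [max_le_iff]
    refine ⟨Nat.zero_le _, ?_⟩
    apply Polynomial.natDegree_sum_le_of_forall_le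
    intro k _
    refine le_trans Polynomial.natDegree_pow_le ?_
    have := Pk_natDegree_le (α := α) (β := β) (n := n) (M := M) k
    omega
  have hcoeff2M : (Qp α β n M).coeff (2 * M) ≠ 0 := by
    unfold Qp
    rw [Polynomial.coeff_C_mul, Polynomial.coeff_add, Polynomial.finset_sum_coeff]
    have hone : (1 : Polynomial ℝ).coeff (2 * M) = 0 := by
      rw [Polynomial.coeff_one]
      simp only [ite_eq_right_iff]
      intro h
      omega
    have hterm : ∀ k ∈ Finset.range (M + 2),
        ((Pk α β n M k) ^ 2).coeff (2 * M) = ((Pk α β n M k).coeff M) ^ 2 := by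
      intro k _
      rw [two_mul]
      exact coeff_sq _ (Pk_natDegree_le k)
    rw [hone, Finset.sum_congr rfl hterm, zero_add]
    have hpos : 0 < ∑ k ∈ Finset.range (M + 2), ((Pk α β n M k).coeff M) ^ 2 := by
      apply Finset.sum_pos' (fun k _ => sq_nonneg _)
      refine ⟨M + 1, Finset.mem_range.2 (by omega), ?_⟩
      have hne := Ptop_coeff hα hβ hn hM1 hNα hMα hMαβ
      exact lt_of_le_of_ne (sq_nonneg _) (Ne.symm (pow_ne_zero 2 hne))
    positivity
  exact le_antisymm hub (Polynomial.le_natDegree_of_ne_zero hcoeff2M)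

lemma Qp_eval (p : ℝ) :
    (Qp α β n M).eval p
      = (1 + ∑ k ∈ Finset.range (M + 2), ((Pk α β n M k).eval p) ^ 2) / 2 := by
  unfold Qp
  rw [Polynomial.eval_mul, Polynomial.eval_C, Polynomial.eval_add, Polynomial.eval_one,
    Polynomial.eval_finset_sum]
  have h2 : ∀ k ∈ Finset.range (M + 2),
      Polynomial.eval p ((Pk α β n M k) ^ 2) = ((Pk α β n M k).eval p) ^ 2 :=
    fun k _ => by rw [Polynomial.eval_pow]
  rw [Finset.sum_congr rfl h2]
  ring

lemma main_eval (hα : 0 < α) (hβ : 0 < β) (hn : 0 < n)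
    (hNα : n ≤ α * (M + 1)) {p : ℝ} (hp0 : 0 ≤ p) (hp1 : p ≤ 1)
    (Ω : Type) [MeasurableSpace Ω] (μ : Measure Ω) [IsProbabilityMeasure μ]
    (X Y : ℕ → Ω → Bool)
    (hXm : ∀ i, Measurable (X i)) (hYm : ∀ i, Measurable (Y i))
    (hind : iIndepFun (Sum.elim X Y) μ)
    (hXp : ∀ i, μ {ω | X i ω = true} = ENNReal.ofReal p)
    (hYp : ∀ i, μ {ω | Y i ω = true} = ENNReal.ofReal p) :
    μ {ω | hitTime α β n X ω ≤ hitTime α β n Y ω}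
      = ENNReal.ofReal ((Qp α β n M).eval p) := by
  classical
  have hNR : n ≤ α * ((M + 1 : ℕ) : ℝ) := by push_cast; exact hNα
  set f : (Fin M → Bool) → ℝ := fun u => (WP u).eval p with hf
  have hfnn : ∀ u, 0 ≤ f u := by
    intro u
    rw [hf]
    simp only
    rw [WP_eval]
    apply Finset.prod_nonneg
    intro i _
    by_cases h : u i <;> simp [h] <;> linarith
  set D : Finset ((Fin M → Bool) × (Fin M → Bool)) :=
    Finset.univ.filter (fun x => ct α β n M x.1 ≤ ct α β n M x.2) with hD
  set atom : ((Fin M → Bool) × (Fin M → Bool)) → Set Ω :=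
    fun x => {ω | (∀ i : Fin M, X i ω = x.1 i) ∧ (∀ i : Fin M, Y i ω = x.2 i)} with hatomdef
  have hct : ∀ (Z : ℕ → Ω → Bool) (ω : Ω),
      hitTime α β n Z ω = ct α β n M (fun i => Z i ω) := by
    intro Z ω
    rw [hitTime_eq]
    unfold ct
    exact hT_congr hα hβ hNR (le_refl (M + 1)) (fun i hi => by simp [bext, hi])
  have hEunion : {ω | hitTime α β n X ω ≤ hitTime α β n Y ω} = ⋃ x ∈ D, atom x := by
    ext ω
    simp only [Set.mem_setOf_eq, Set.mem_iUnion₂]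
    constructor
    · intro h
      refine ⟨(fun i => X i ω, fun i => Y i ω), ?_, fun i => rfl, fun i => rfl⟩
      rw [hD, Finset.mem_filter]
      refine ⟨Finset.mem_univ _, ?_⟩
      rw [← hct X ω, ← hct Y ω]
      exact h
    · rintro ⟨x, hxD, hx1, hx2⟩
      rw [hD, Finset.mem_filter] at hxD
      have e1 : (fun i : Fin M => X i ω) = x.1 := funext hx1
      have e2 : (fun i : Fin M => Y i ω) = x.2 := funext hx2
      rw [hct X ω, hct Y ω, e1, e2]
      exact hxD.2
  have hmeasatom : ∀ x, MeasurableSet (atom x) := by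
    intro x
    have heq : atom x = (⋂ i : Fin M, X i ⁻¹' {x.1 i}) ∩ ⋂ i : Fin M, Y i ⁻¹' {x.2 i} := by
      ext ω
      simp [hatomdef]
    rw [heq]
    exact (MeasurableSet.iInter (fun i : Fin M => hXm i.val (measurableSet_singleton (x.1 i)))).inter
      (MeasurableSet.iInter (fun i : Fin M => hYm i.val (measurableSet_singleton (x.2 i))))
  have hdisj : Set.PairwiseDisjoint (↑D) atom := by
    intro x _ y _ hxy
    apply Set.disjoint_left.2
    intro ω hx hy
    apply hxy
    rw [hatomdef] at hx hy
    simp only [Set.mem_setOf_eq] at hx hy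
    have e1 : x.1 = y.1 := funext (fun i => (hx.1 i).symm.trans (hy.1 i))
    have e2 : x.2 = y.2 := funext (fun i => (hx.2 i).symm.trans (hy.2 i))
    exact Prod.ext e1 e2
  rw [hEunion, measure_biUnion_finset hdisj (fun x _ => hmeasatom x)]
  have hatommeas : ∀ x ∈ D, μ (atom x) = ENNReal.ofReal (f x.1 * f x.2) := by
    intro x _
    rw [hatomdef]
    simp only
    rw [atom_meas hXm hYm hind hXp hYp hp0 hp1 x.1 x.2]
    congr 1
    rw [hf]
    simp only
    rw [WP_eval, WP_eval]
  rw [Finset.sum_congr rfl hatommeas,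
    ← ENNReal.ofReal_sum_of_nonneg (fun x _ => mul_nonneg (hfnn x.1) (hfnn x.2))]
  congr 1
  have hps := pairsum (ι := Fin M → Bool) (g := ct α β n M) (K := M + 2)
    (fun u => ct_lt hα hβ hNα u) f
  rw [hD]
  rw [hps, Qp_eval]
  have h1 : ∑ u, f u = 1 := sum_WP_eval p
  have h2 : ∀ k ∈ Finset.range (M + 2),
      (∑ u ∈ Finset.univ.filter (fun u => ct α β n M u = k), f u) ^ 2
        = ((Pk α β n M k).eval p) ^ 2 := by
    intro k _
    congr 1
    unfold Pk
    rw [Polynomial.eval_finset_sum]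
  rw [h1, Finset.sum_congr rfl h2, one_pow]

end Main

end Stmt18
end Stmt18Aux

theorem stmt_18 (α β n : ℝ) (hα : 0 < α) (hβ : 0 < β) (hn : 0 < n)
    (hceil : ⌈n / (α + β)⌉ < ⌈n / α⌉) :
    -- Part 1: if each `P k` is a polynomial in `p` (rational coefficients) and only finitely
    -- many `k` contribute, then `p ↦ (1 + ∑ₖ P k p ^ 2) / 2` is a polynomial in `p`.
    (∀ (s : Finset ℕ) (P : ℕ → ℝ → ℝ),
      (∀ k, ∃ q : Polynomial ℚ, ∀ p : ℝ, P k p = (q.map (algebraMap ℚ ℝ)).eval p) →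
      (∀ k ∉ s, ∀ p : ℝ, P k p = 0) →
      ∃ Q : Polynomial ℝ, ∀ p : ℝ, (1 + ∑ k ∈ s, P k p ^ 2) / 2 = Q.eval p) ∧
    -- Part 2: the first player's winning probability is a polynomial in `p`
    -- of degree `2⌈n/α⌉ - 2`.
    ∃ Q : Polynomial ℝ, Q.natDegree = 2 * (⌈n / α⌉).toNat - 2 ∧
      ∀ p ∈ Set.Icc (0 : ℝ) 1,
      ∀ (Ω : Type) [MeasurableSpace Ω] (μ : Measure Ω) [IsProbabilityMeasure μ]
        (X Y : ℕ → Ω → Bool),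
        (∀ i, Measurable (X i)) → (∀ i, Measurable (Y i)) →
        iIndepFun (Sum.elim X Y) μ →
        (∀ i, μ {ω | X i ω = true} = ENNReal.ofReal p) →
        (∀ i, μ {ω | Y i ω = true} = ENNReal.ofReal p) →
        μ {ω | hitTime α β n X ω ≤ hitTime α β n Y ω} = ENNReal.ofReal (Q.eval p) := by
  constructor
  · -- Part 1
    intro s P hpoly hzero
    choose q hq using hpoly
    refine ⟨Polynomial.C (2⁻¹ : ℝ)
      * (1 + ∑ k ∈ s, ((q k).map (algebraMap ℚ ℝ)) ^ 2), fun p => ?_⟩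
    rw [Polynomial.eval_mul, Polynomial.eval_C, Polynomial.eval_add, Polynomial.eval_one,
      Polynomial.eval_finset_sum]
    have h2 : ∀ k ∈ s, Polynomial.eval p ((q k).map (algebraMap ℚ ℝ) ^ 2) = P k p ^ 2 :=
      fun k _ => by rw [Polynomial.eval_pow, ← hq k]
    rw [Finset.sum_congr rfl h2]
    ring
  · -- Part 2
    have hαβ : 0 < α + β := by linarith
    have hm1 : (1 : ℤ) ≤ ⌈n / (α + β)⌉ := Int.ceil_pos.2 (div_pos hn hαβ)
    have hN2 : (2 : ℤ) ≤ ⌈n / α⌉ := by omega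
    have hNcast : (((⌈n / α⌉).toNat : ℤ)) = ⌈n / α⌉ := Int.toNat_of_nonneg (by omega)
    set N : ℕ := (⌈n / α⌉).toNat with hNdef
    have hN2' : 2 ≤ N := by omega
    set M : ℕ := N - 1 with hMdef
    have hMN : N = M + 1 := by omega
    have hM1 : 1 ≤ M := by omega
    have hMcast : ((M : ℤ)) = ⌈n / α⌉ - 1 := by omega
    have hNα : n ≤ α * (M + 1) := by
      have h1 : n / α ≤ ((⌈n / α⌉ : ℤ) : ℝ) := Int.le_ceil _
      have h2 : ((⌈n / α⌉ : ℤ) : ℝ) = ((M : ℝ) + 1) := by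
        have : ((N : ℤ) : ℝ) = ((M : ℝ) + 1) := by push_cast [hMN]; ring
        rw [← this, hNcast]
      rw [h2, div_le_iff₀ hα] at h1
      linarith
    have hMα : α * M < n := by
      have h1 : (M : ℤ) < ⌈n / α⌉ := by omega
      have h2 : ((M : ℤ) : ℝ) < n / α := Int.lt_ceil.1 h1
      rw [lt_div_iff₀ hα] at h2
      push_cast at h2
      linarith
    have hMαβ : n ≤ (α + β) * M := by
      have h1 : ⌈n / (α + β)⌉ ≤ (M : ℤ) := by omega
      have h2 : n / (α + β) ≤ ((M : ℤ) : ℝ) := le_trans (Int.le_ceil _) (by exact_mod_cast h1)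
      rw [div_le_iff₀ hαβ] at h2
      push_cast at h2
      linarith
    refine ⟨Stmt18.Qp α β n M, ?_, ?_⟩
    · rw [Stmt18.Qp_natDegree hα hβ hn hM1 hNα hMα hMαβ]
      omega
    · intro p hp Ω _ μ _ X Y hXm hYm hind hXp hYp
      exact Stmt18.main_eval hα hβ hn hNα hp.1 hp.2 Ω μ X Y hXm hYm hind hXp hYp
end
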